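/- arXiv:2408.16985 — 4 statements merged into one kernel-verified Lean document; each statement's English description precedes it below -/
import Mathlib

section
/- ODE comparison lemma: let f be a nonnegative measurable function on (0,T) satisfying ∞ > f(t) ≥ a₁ + a₂ ∫_{t_*}^t s^{-a} f(s)^b ds for almost all t ∈ (t_*, T), where a₁, a₂ > 0, a ≥ 0, b > 1, and t_* ∈ (0, T/2). Then there exists C = C(a,b) > 0 such that a₁ ≤ C a₂^{-1/(b-1)} t_*^{(a-1)/(b-1)}. -/
open MeasureTheory Set

noncomputable section

abbrev E (N : ℕ) := EuclideanSpace ℝ (Fin N)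
/-- The Heisenberg group `ℍ^N` as a set: `ℝ^N × ℝ^N × ℝ`. -/
abbrev H (N : ℕ) := E N × E N × ℝ

/-- Heisenberg group law. -/
def hmul {N : ℕ} (a b : H N) : H N :=
  (a.1 + b.1, a.2.1 + b.2.1,
    a.2.2 + b.2.2 + 2 * ((inner ℝ a.1 b.2.1 : ℝ) - (inner ℝ b.1 a.2.1 : ℝ)))

/-- Homogeneous Heisenberg norm. -/
def hnorm {N : ℕ} (a : H N) : ℝ :=
  ((‖a.1‖ ^ 2 + ‖a.2.1‖ ^ 2) ^ 2 + a.2.2 ^ 2) ^ (1/4 : ℝ)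

/-- Left-invariant distance `d_ℍ(η,ζ) = |ζ⁻¹ ∘ η|`. -/
def hdist {N : ℕ} (a b : H N) : ℝ := hnorm (hmul (-b) a)

/-- Metric ball. -/
def hball {N : ℕ} (a : H N) (r : ℝ) : Set (H N) := {b | hdist b a < r}

/-- Parabolic dilation. -/
def dil {N : ℕ} (l : ℝ) (a : H N) : H N := (l • a.1, l • a.2.1, l ^ 2 * a.2.2)

lemma aux_step (K a₁ b : ℝ) (ha₁ : 0 < a₁) (hK : 0 < K) (hb : 1 < b)
    (h : 2 * 2 ^ ((2:ℝ)/(b-1)) ≤ K * a₁ ^ (b-1)) (n : ℕ) :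
    a₁ * 2 ^ (2*((n:ℝ)+1)/(b-1)) ≤ K * ((1/2:ℝ)^(n+1)) * (a₁ * 2 ^ (2*(n:ℝ)/(b-1))) ^ b := by
  have hb1 : 0 < b - 1 := by linarith
  have h2 : (0:ℝ) < 2 := two_pos
  have hhalf : ((1/2:ℝ))^(n+1) = (2:ℝ) ^ (-((n:ℝ)+1)) := by
    rw [Real.rpow_neg h2.le, one_div, inv_pow, ← Real.rpow_natCast (2:ℝ) (n+1)]
    push_cast; ring_nf
  have hmul : (a₁ * 2 ^ (2*(n:ℝ)/(b-1))) ^ b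
      = a₁ ^ b * 2 ^ (2*(n:ℝ)/(b-1) * b) := by
    rw [Real.mul_rpow ha₁.le (Real.rpow_pos_of_pos h2 _).le, ← Real.rpow_mul h2.le]
  have ha₁b : a₁ ^ b = a₁ ^ (b-1) * a₁ := by
    rw [← Real.rpow_add_one ha₁.ne' (b-1)]; ring_nf
  rw [hhalf, hmul, ha₁b]
  have key : (2:ℝ) ^ (2*((n:ℝ)+1)/(b-1))
      ≤ (2 * 2 ^ ((2:ℝ)/(b-1))) * (2 ^ (-((n:ℝ)+1)) * 2 ^ (2*(n:ℝ)/(b-1) * b)) := by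
    have e1 : (2:ℝ) * 2 ^ ((2:ℝ)/(b-1)) = 2 ^ (1 + (2:ℝ)/(b-1)) := by
      rw [Real.rpow_add h2, Real.rpow_one]
    rw [e1, ← Real.rpow_add h2, ← Real.rpow_add h2]
    apply Real.rpow_le_rpow_of_exponent_le one_le_two
    have hid : 1 + 2/(b-1) + (-((n:ℝ)+1) + 2*(n:ℝ)/(b-1) * b)
        = 2*((n:ℝ)+1)/(b-1) + (n:ℝ) := by
      field_simp; ring
    have hn : (0:ℝ) ≤ (n:ℝ) := Nat.cast_nonneg n
    linarith [hid]
  calc a₁ * 2 ^ (2*((n:ℝ)+1)/(b-1))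
      ≤ a₁ * ((2 * 2 ^ ((2:ℝ)/(b-1))) * (2 ^ (-((n:ℝ)+1)) * 2 ^ (2*(n:ℝ)/(b-1) * b))) := by
        apply mul_le_mul_of_nonneg_left key ha₁.le
    _ ≤ a₁ * ((K * a₁ ^ (b-1)) * (2 ^ (-((n:ℝ)+1)) * 2 ^ (2*(n:ℝ)/(b-1) * b))) := by
        apply mul_le_mul_of_nonneg_left _ ha₁.le
        apply mul_le_mul_of_nonneg_right h
        positivity
    _ = K * 2 ^ (-((n:ℝ)+1)) * (a₁ ^ (b-1) * a₁ * 2 ^ (2*(n:ℝ)/(b-1) * b)) := by ring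

lemma aux_const (a b a₁ a₂ t₀ : ℝ) (ha : 0 ≤ a) (hb : 1 < b) (ha₁ : 0 < a₁) (ha₂ : 0 < a₂)
    (ht₀ : 0 < t₀)
    (h : 2 ^ ((1+a+2/(b-1))/(b-1)) * a₂ ^ (-(1:ℝ)/(b-1)) * t₀ ^ ((a-1)/(b-1)) < a₁) :
    2 * 2 ^ ((2:ℝ)/(b-1)) ≤ (a₂ * (2*t₀) ^ (-a) * t₀) * a₁ ^ (b-1) := by
  have hb1 : 0 < b - 1 := by linarith
  have h2 : (0:ℝ) < 2 := two_pos
  have h1 : Real.log (2 ^ ((1+a+2/(b-1))/(b-1)) * a₂ ^ (-(1:ℝ)/(b-1)) * t₀ ^ ((a-1)/(b-1)))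
      < Real.log a₁ := Real.log_lt_log (by positivity) h
  rw [Real.log_mul (by positivity) (by positivity), Real.log_mul (by positivity) (by positivity),
    Real.log_rpow h2, Real.log_rpow ha₂, Real.log_rpow ht₀] at h1
  rw [← Real.log_le_log_iff (by positivity) (by positivity),
    Real.log_mul (by positivity) (by positivity),
    Real.log_mul (by positivity) (by positivity),
    Real.log_mul (by positivity) (by positivity),
    Real.log_mul (by positivity) (by positivity),
    Real.log_rpow h2, Real.log_rpow ha₁, Real.log_rpow (by positivity : (0:ℝ) < 2*t₀),
    Real.log_mul two_ne_zero ht₀.ne']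
  have h3 := mul_lt_mul_of_pos_right h1 hb1
  have e1 : ((1+a+2/(b-1))/(b-1) * Real.log 2 + -(1:ℝ)/(b-1) * Real.log a₂
      + (a-1)/(b-1) * Real.log t₀) * (b-1)
      = (1+a+2/(b-1)) * Real.log 2 - Real.log a₂ + (a-1) * Real.log t₀ := by
    field_simp; ring
  rw [e1] at h3
  have e2 : (2:ℝ)/(b-1) * (b-1) = 2 := by field_simp
  nlinarith [h3, e2]

/-- ODE comparison lemma: if `f(t) ≥ a₁ + a₂ ∫_{t₀}^t s^{-a} f(s)^b ds` a.e. on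
`(t₀,T)` with `t₀ ∈ (0,T/2)`, then `a₁ ≤ C a₂^{-1/(b-1)} t₀^{(a-1)/(b-1)}` with
`C = C(a,b)`. -/
theorem stmt_11 (a b : ℝ) (ha : 0 ≤ a) (hb : 1 < b) :
    ∃ C : ℝ, 0 < C ∧ ∀ (T a₁ a₂ t₀ : ℝ) (f : ℝ → ℝ),
      0 < T → 0 < a₁ → 0 < a₂ → 0 < t₀ → t₀ < T / 2 →
      Measurable f → (∀ t ∈ Set.Ioo (0 : ℝ) T, 0 ≤ f t) →
      (∀ᵐ t ∂(volume.restrict (Set.Ioo t₀ T)),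
        IntegrableOn (fun s => s ^ (-a) * f s ^ b) (Set.Ioc t₀ t) ∧
        a₁ + a₂ * ∫ s in Set.Ioc t₀ t, s ^ (-a) * f s ^ b ≤ f t) →
      a₁ ≤ C * a₂ ^ (-(1 : ℝ) / (b - 1)) * t₀ ^ ((a - 1) / (b - 1)) := by
  have hb1 : 0 < b - 1 := by linarith
  refine ⟨2 ^ ((1 + a + 2/(b-1))/(b-1)), by positivity, ?_⟩
  intro T a₁ a₂ t₀ f hT ha₁ ha₂ ht₀ ht₀T hf hf0 hae
  by_contra hcon
  push_neg at hcon
  have h2t₀ : 2 * t₀ < T := by linarith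
  -- the key constant
  set K : ℝ := a₂ * (2*t₀) ^ (-a) * t₀ with hKdef
  have hKpos : 0 < K := by
    have : (0:ℝ) < (2*t₀) ^ (-a) := Real.rpow_pos_of_pos (by linarith) _
    positivity
  have hKa : 2 * 2 ^ ((2:ℝ)/(b-1)) ≤ K * a₁ ^ (b-1) :=
    aux_const a b a₁ a₂ t₀ ha hb ha₁ ha₂ ht₀ hcon
  -- sequences
  set tseq : ℕ → ℝ := fun n => 2*t₀ - t₀ * (1/2:ℝ)^n with htseq
  set c : ℕ → ℝ := fun n => a₁ * (2:ℝ) ^ (2*(n:ℝ)/(b-1)) with hcdef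
  have hcpos : ∀ n, 0 < c n := fun n => by
    have := Real.rpow_pos_of_pos (two_pos (α := ℝ)) (2*(n:ℝ)/(b-1)); positivity
  have htseq_lt : ∀ n, tseq n < 2*t₀ := fun n => by
    have : (0:ℝ) < t₀ * (1/2:ℝ)^n := by positivity
    simp only [htseq]; linarith
  have htseq_ge : ∀ n, t₀ ≤ tseq n := fun n => by
    have h1 : ((1/2:ℝ))^n ≤ 1 := pow_le_one₀ (by norm_num) (by norm_num)
    have := mul_le_mul_of_nonneg_left h1 ht₀.le
    simp only [htseq]; nlinarith
  have htseq_mono : ∀ n, tseq n < tseq (n+1) := fun n => by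
    have h1 : ((1/2:ℝ))^(n+1) < (1/2:ℝ)^n := by
      apply pow_lt_pow_right_of_lt_one₀ (by norm_num) (by norm_num); omega
    have := mul_lt_mul_of_pos_left h1 ht₀
    simp only [htseq]; linarith
  have hdiff : ∀ n, tseq (n+1) - tseq n = t₀ * (1/2:ℝ)^(n+1) := fun n => by
    simp only [htseq]; rw [pow_succ]; ring
  -- main induction
  have key : ∀ n : ℕ, ∀ᵐ t ∂(volume.restrict (Set.Ioo t₀ T)), tseq n < t → c n ≤ f t := by
    intro n
    induction n with
    | zero =>
      filter_upwards [hae, ae_restrict_mem measurableSet_Ioo] with t ⟨_, hle⟩ htmem _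
      have hnn : 0 ≤ ∫ s in Set.Ioc t₀ t, s ^ (-a) * f s ^ b := by
        apply setIntegral_nonneg measurableSet_Ioc
        intro s hs
        have hs0 : 0 < s := lt_trans ht₀ hs.1
        have hfs : 0 ≤ f s := hf0 s ⟨hs0, lt_of_le_of_lt hs.2 htmem.2⟩
        have := Real.rpow_pos_of_pos hs0 (-a)
        have := Real.rpow_nonneg hfs b
        positivity
      have : c 0 = a₁ := by simp [hcdef]
      rw [this]
      nlinarith
    | succ n ih =>
      -- a.e. lower bound on the slab
      have hsubS : Set.Ioc (tseq n) (tseq (n+1)) ⊆ Set.Ioo t₀ T := by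
        intro s hs
        exact ⟨lt_of_le_of_lt (htseq_ge n) hs.1,
          lt_of_le_of_lt hs.2 (lt_of_lt_of_le (htseq_lt (n+1)) h2t₀.le)⟩
      have ih' : ∀ᵐ s ∂(volume.restrict (Set.Ioc (tseq n) (tseq (n+1)))), c n ≤ f s := by
        filter_upwards [ae_restrict_of_ae_restrict_of_subset hsubS ih,
          ae_restrict_mem measurableSet_Ioc] with s hs hmem
        exact hs hmem.1
      filter_upwards [hae, ae_restrict_mem measurableSet_Ioo] with t ⟨hint, hle⟩ htmem htn
      have hsub2 : Set.Ioc (tseq n) (tseq (n+1)) ⊆ Set.Ioc t₀ t := fun s hs =>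
        ⟨lt_of_le_of_lt (htseq_ge n) hs.1, hs.2.trans htn.le⟩
      -- pointwise nonneg of integrand on Ioc t₀ t
      have hptnn : ∀ s ∈ Set.Ioc t₀ t, 0 ≤ s ^ (-a) * f s ^ b := by
        intro s hs
        have hs0 : 0 < s := lt_trans ht₀ hs.1
        have hfs : 0 ≤ f s := hf0 s ⟨hs0, lt_of_le_of_lt hs.2 htmem.2⟩
        have := Real.rpow_pos_of_pos hs0 (-a)
        have := Real.rpow_nonneg hfs b
        positivity
      -- lower bound of the slab integral
      have hlow : (2*t₀) ^ (-a) * c n ^ b * (t₀ * (1/2:ℝ)^(n+1))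
          ≤ ∫ s in Set.Ioc (tseq n) (tseq (n+1)), s ^ (-a) * f s ^ b := by
        have hconst : ∫ s in Set.Ioc (tseq n) (tseq (n+1)), ((2*t₀) ^ (-a) * c n ^ b : ℝ)
            = (2*t₀) ^ (-a) * c n ^ b * (t₀ * (1/2:ℝ)^(n+1)) := by
          rw [setIntegral_const, Real.volume_real_Ioc, smul_eq_mul,
            max_eq_left (by rw [hdiff]; positivity), hdiff]
          ring
        rw [← hconst]
        apply integral_mono_ae
        · exact integrableOn_const (by rw [Real.volume_Ioc]; exact ENNReal.ofReal_ne_top)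
        · exact hint.mono_set hsub2
        · filter_upwards [ih', ae_restrict_mem measurableSet_Ioc] with s hcs hmem
          have hs0 : 0 < s := lt_trans ht₀ (lt_of_le_of_lt (htseq_ge n) hmem.1)
          have h1 : (2*t₀) ^ (-a) ≤ s ^ (-a) :=
            Real.rpow_le_rpow_of_nonpos hs0
              (hmem.2.trans (htseq_lt (n+1)).le) (by linarith)
          have h2 : c n ^ b ≤ f s ^ b :=
            Real.rpow_le_rpow (hcpos n).le hcs (by linarith)
          exact mul_le_mul h1 h2 (Real.rpow_nonneg (hcpos n).le b)
            (Real.rpow_pos_of_pos hs0 (-a)).le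
      -- assemble
      have hmono : ∫ s in Set.Ioc (tseq n) (tseq (n+1)), s ^ (-a) * f s ^ b
          ≤ ∫ s in Set.Ioc t₀ t, s ^ (-a) * f s ^ b := by
        apply setIntegral_mono_set hint
        · filter_upwards [ae_restrict_mem measurableSet_Ioc] with s hs
          exact hptnn s hs
        · exact hsub2.eventuallyLE
      have hstep : c (n+1) ≤ K * ((1/2:ℝ)^(n+1)) * c n ^ b := by
        have := aux_step K a₁ b ha₁ hKpos hb hKa n
        have hcast : c (n+1) = a₁ * 2 ^ (2*((n:ℝ)+1)/(b-1)) := by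
          simp only [hcdef]; push_cast; ring_nf
        rw [hcast]; exact this
      calc c (n+1) ≤ K * ((1/2:ℝ)^(n+1)) * c n ^ b := hstep
        _ = a₂ * ((2*t₀) ^ (-a) * c n ^ b * (t₀ * (1/2:ℝ)^(n+1))) := by
            rw [hKdef]; ring
        _ ≤ a₂ * ∫ s in Set.Ioc (tseq n) (tseq (n+1)), s ^ (-a) * f s ^ b :=
            mul_le_mul_of_nonneg_left hlow ha₂.le
        _ ≤ a₂ * ∫ s in Set.Ioc t₀ t, s ^ (-a) * f s ^ b :=
            mul_le_mul_of_nonneg_left hmono ha₂.le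
        _ ≤ a₁ + a₂ * ∫ s in Set.Ioc t₀ t, s ^ (-a) * f s ^ b := by linarith
        _ ≤ f t := hle
  -- extract a point
  have hall : ∀ᵐ t ∂(volume.restrict (Set.Ioo t₀ T)), ∀ n, tseq n < t → c n ≤ f t :=
    (MeasureTheory.ae_all_iff).2 key
  have hsub3 : Set.Ioo (2*t₀) T ⊆ Set.Ioo t₀ T := fun s hs => ⟨by linarith [hs.1], hs.2⟩
  have hne : volume.restrict (Set.Ioo (2*t₀) T) ≠ 0 := by
    rw [ne_eq, Measure.restrict_eq_zero, Real.volume_Ioo]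
    simp only [ne_eq, ENNReal.ofReal_eq_zero, not_le]
    linarith
  haveI : (ae (volume.restrict (Set.Ioo (2*t₀) T))).NeBot := MeasureTheory.ae_neBot.2 hne
  obtain ⟨t, ht1, ht2⟩ :=
    ((ae_restrict_of_ae_restrict_of_subset hsub3 hall).and
      (ae_restrict_mem measurableSet_Ioo)).exists
  -- contradiction with unboundedness
  have hy1 : (1:ℝ) < 2 ^ ((2:ℝ)/(b-1)) :=
    Real.one_lt_rpow_iff_of_pos two_pos |>.2 (Or.inl ⟨one_lt_two, by positivity⟩)
  obtain ⟨n, hn⟩ := pow_unbounded_of_one_lt (f t / a₁) hy1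
  have hcn : c n ≤ f t := ht1 n (lt_trans (htseq_lt n) ht2.1)
  have hpow : ((2:ℝ) ^ ((2:ℝ)/(b-1)))^n = (2:ℝ) ^ (2*(n:ℝ)/(b-1)) := by
    rw [← Real.rpow_natCast ((2:ℝ) ^ ((2:ℝ)/(b-1))) n, ← Real.rpow_mul two_pos.le]
    congr 1; ring
  rw [div_lt_iff₀ ha₁, hpow] at hn
  simp only [hcdef] at hcn
  linarith [hn, hcn]
end
end

section
/- ODE comparison lemma, logarithmic case: let f be a nonnegative measurable function on (0,T) with ∞ > f(t) ≥ a₁ + a₂ ∫_{t_*}^t s^{-1} f(s)^b ds for a.a. t ∈ (t_*, T), where a₁, a₂ > 0, b > 1, and t_* ∈ (0, T/2). Then a₁ ≤ (a₂(b−1))^{-1/(b-1)} [log(T/(2t_*))]^{-1/(b-1)}. -/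
open MeasureTheory Set

noncomputable section

set_option maxHeartbeats 1000000 in
/-- ODE comparison lemma, logarithmic case `a = 1`. -/
theorem stmt_12 (b : ℝ) (hb : 1 < b) :
    ∀ (T a₁ a₂ t₀ : ℝ) (f : ℝ → ℝ),
      0 < T → 0 < a₁ → 0 < a₂ → 0 < t₀ → t₀ < T / 2 →
      Measurable f → (∀ t ∈ Set.Ioo (0 : ℝ) T, 0 ≤ f t) →
      (∀ᵐ t ∂(volume.restrict (Set.Ioo t₀ T)),
        IntegrableOn (fun s => s ^ (-(1 : ℝ)) * f s ^ b) (Set.Ioc t₀ t) ∧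
        a₁ + a₂ * ∫ s in Set.Ioc t₀ t, s ^ (-(1 : ℝ)) * f s ^ b ≤ f t) →
      a₁ ≤ (a₂ * (b - 1)) ^ (-(1 : ℝ) / (b - 1)) *
        (Real.log (T / (2 * t₀))) ^ (-(1 : ℝ) / (b - 1)) := by
  intro T a₁ a₂ t₀ f hT ha₁ ha₂ ht₀ ht₀T hfm hfpos hae
  have hb0 : (0:ℝ) < b := lt_trans one_pos hb
  have hb1 : (0:ℝ) < b - 1 := by linarith
  set h : ℝ → ℝ := fun s => s ^ (-(1 : ℝ)) * f s ^ b with hh_def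
  set g : ℝ → ℝ := fun t => ∫ s in Set.Ioc t₀ t, h s with hg_def
  rw [MeasureTheory.ae_restrict_iff' measurableSet_Ioo] at hae
  -- pick a good point t₁ in (T/2, T)
  obtain ⟨t₁, ht₁, hInt, _⟩ :
      ∃ t ∈ Set.Ioo (T/2) T, IntegrableOn h (Set.Ioc t₀ t) ∧
        a₁ + a₂ * g t ≤ f t := by
    by_contra hc
    push_neg at hc
    have h0 := hae
    rw [MeasureTheory.ae_iff] at h0
    have hsub : Set.Ioo (T/2) T ⊆
        {t | ¬ (t ∈ Set.Ioo t₀ T → IntegrableOn h (Set.Ioc t₀ t) ∧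
          a₁ + a₂ * g t ≤ f t)} := by
      intro t ht
      have htIoo : t ∈ Set.Ioo t₀ T := ⟨lt_trans ht₀T ht.1, ht.2⟩
      intro hcon
      exact absurd (hcon htIoo).2 (not_le_of_gt (hc t ht (hcon htIoo).1))
    have : volume (Set.Ioo (T/2) T) = 0 := measure_mono_null hsub h0
    rw [Real.volume_Ioo] at this
    have : T - T/2 ≤ 0 := by
      by_contra hlt
      push_neg at hlt
      simp [ENNReal.ofReal_eq_zero] at this
      linarith
    linarith
  have hAE : ∀ᵐ s, s ∈ Set.Ioo t₀ T → a₁ + a₂ * g s ≤ f s :=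
    hae.mono fun s hs hmem => (hs hmem).2
  have ht₀t₁ : t₀ < t₁ := lt_trans ht₀T ht₁.1
  have ht₁T : t₁ < T := ht₁.2
  have ht₁pos : 0 < t₁ := lt_trans ht₀ ht₀t₁
  -- splitting of g
  have hsplit : ∀ u v : ℝ, t₀ ≤ u → u ≤ v → v ≤ t₁ →
      g v = g u + ∫ s in Set.Ioc u v, h s := by
    intro u v h1 h2 h3
    have hun : Set.Ioc t₀ u ∪ Set.Ioc u v = Set.Ioc t₀ v :=
      Set.Ioc_union_Ioc_eq_Ioc h1 h2
    have hi1 : IntegrableOn h (Set.Ioc t₀ u) :=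
      hInt.mono_set (Set.Ioc_subset_Ioc le_rfl (le_trans h2 h3))
    have hi2 : IntegrableOn h (Set.Ioc u v) :=
      hInt.mono_set (Set.Ioc_subset_Ioc h1 h3)
    rw [hg_def]
    simp only
    rw [← hun, MeasureTheory.setIntegral_union (Set.Ioc_disjoint_Ioc_of_le le_rfl)
      measurableSet_Ioc hi1 hi2]
  have hg_t₀ : g t₀ = 0 := by
    rw [hg_def]; simp
  -- nonnegativity of h on (0, T)
  have hpos : ∀ s : ℝ, 0 < s → s < T → 0 ≤ h s := by
    intro s hs1 hs2
    apply mul_nonneg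
    · exact Real.rpow_nonneg hs1.le _
    · exact Real.rpow_nonneg (hfpos s ⟨hs1, hs2⟩) _
  -- monotonicity of g
  have hgmono : ∀ u v : ℝ, t₀ ≤ u → u ≤ v → v ≤ t₁ → g u ≤ g v := by
    intro u v h1 h2 h3
    rw [hsplit u v h1 h2 h3]
    have : 0 ≤ ∫ s in Set.Ioc u v, h s := by
      apply MeasureTheory.setIntegral_nonneg measurableSet_Ioc
      intro s hs
      exact hpos s (by nlinarith [hs.1, hs.2]) (by nlinarith [hs.1, hs.2])
    linarith
  have hgnonneg : ∀ u : ℝ, t₀ ≤ u → u ≤ t₁ → 0 ≤ g u := by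
    intro u h1 h2
    have := hgmono t₀ u le_rfl h1 h2
    rw [hg_t₀] at this; exact this
  -- key integral lower bound
  have hkey : ∀ x z : ℝ, t₀ ≤ x → x < z → z ≤ t₁ →
      (a₁ + a₂ * g x) ^ b * ((z - x) / z) ≤ g z - g x := by
    intro x z hx hxz hz
    have hzpos : 0 < z := by linarith
    have hEq := hsplit x z hx hxz.le hz
    have hIxz : IntegrableOn h (Set.Ioc x z) :=
      hInt.mono_set (Set.Ioc_subset_Ioc hx hz)
    have hgx0 : 0 ≤ g x := hgnonneg x hx (le_trans hxz.le hz)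
    have hax : 0 < a₁ + a₂ * g x := by nlinarith
    have hbound : ∀ᵐ s ∂(volume.restrict (Set.Ioc x z)),
        (a₁ + a₂ * g x) ^ b / z ≤ h s := by
      filter_upwards [MeasureTheory.ae_restrict_mem measurableSet_Ioc,
        MeasureTheory.ae_restrict_of_ae hAE] with s hs hineq
      have hsT : s ∈ Set.Ioo t₀ T :=
        ⟨lt_of_le_of_lt hx hs.1, lt_of_le_of_lt (le_trans hs.2 hz) ht₁T⟩
      have hspos : 0 < s := lt_trans ht₀ hsT.1
      have hgs : g x ≤ g s := hgmono x s hx hs.1.le (le_trans hs.2 hz)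
      have h2 : a₁ + a₂ * g x ≤ f s := by
        have := hineq hsT; nlinarith
      have h3 : (a₁ + a₂ * g x) ^ b ≤ f s ^ b :=
        Real.rpow_le_rpow hax.le h2 hb0.le
      have hfs0 : 0 ≤ f s := hfpos s ⟨hspos, hsT.2⟩
      have h4 : (a₁ + a₂ * g x) ^ b / z ≤ f s ^ b / s :=
        div_le_div₀ (Real.rpow_nonneg hfs0 _) h3 hspos hs.2
      calc (a₁ + a₂ * g x) ^ b / z ≤ f s ^ b / s := h4
        _ = s ^ (-(1:ℝ)) * f s ^ b := by
            rw [Real.rpow_neg_one]; ring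
        _ = h s := rfl
    have hconst : IntegrableOn (fun _ : ℝ => (a₁ + a₂ * g x) ^ b / z)
        (Set.Ioc x z) := integrableOn_const measure_Ioc_lt_top.ne
    have hle := MeasureTheory.integral_mono_ae hconst hIxz hbound
    rw [MeasureTheory.setIntegral_const] at hle
    rw [measureReal_def, Real.volume_Ioc, ENNReal.toReal_ofReal (by linarith)] at hle
    have : (a₁ + a₂ * g x) ^ b * ((z - x) / z)
        = (z - x) • ((a₁ + a₂ * g x) ^ b / z) := by
      rw [smul_eq_mul]; ring
    rw [this, hEq]
    linarith [hle]
  -- the function Φ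
  set Φ : ℝ → ℝ := fun y => -(a₂ * (b-1))⁻¹ * (a₁ + a₂ * y) ^ (1 - b) with hΦ_def
  have hΦd : ∀ y : ℝ, 0 ≤ y → HasDerivAt Φ ((a₁ + a₂ * y) ^ (-b)) y := by
    intro y hy
    have hay : 0 < a₁ + a₂ * y := by nlinarith
    have h1 : HasDerivAt (fun y : ℝ => a₁ + a₂ * y) a₂ y := by
      simpa using ((hasDerivAt_id y).const_mul a₂).const_add a₁
    have h2 : HasDerivAt (fun x : ℝ => x ^ (1 - b))
        ((1 - b) * (a₁ + a₂ * y) ^ (1 - b - 1)) (a₁ + a₂ * y) :=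
      Real.hasDerivAt_rpow_const (Or.inl hay.ne')
    have h3 := (h2.comp y h1).const_mul (-(a₂ * (b-1))⁻¹)
    convert h3 using 1
    case e'_4 => rfl
    case e'_5 => rfl
    case e'_8 => rfl
    have hne : a₂ * (b - 1) ≠ 0 := by positivity
    have : (1 : ℝ) - b - 1 = -b := by ring
    rw [this]
    field_simp
    ring
  have hΦcont : ∀ y : ℝ, 0 ≤ y → ContinuousAt Φ y := fun y hy =>
    (hΦd y hy).continuousAt
  -- MVT consequence for Φ
  have hΦslope : ∀ u v : ℝ, 0 ≤ u → u < v →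
      (a₁ + a₂ * v) ^ (-b) * (v - u) ≤ Φ v - Φ u := by
    intro u v hu huv
    have hcont : ContinuousOn Φ (Set.Icc u v) := fun y hy =>
      (hΦcont y (le_trans hu hy.1)).continuousWithinAt
    obtain ⟨c, hc, hceq⟩ := exists_hasDerivAt_eq_slope Φ
      (fun y => (a₁ + a₂ * y) ^ (-b)) huv hcont
      (fun y hy => hΦd y (le_trans hu hy.1.le))
    have hcpos : 0 < a₁ + a₂ * c := by nlinarith [hc.1, hu]
    have hvpos : 0 < a₁ + a₂ * v := by nlinarith
    have hmono : (a₁ + a₂ * v) ^ (-b) ≤ (a₁ + a₂ * c) ^ (-b) := by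
      rw [Real.rpow_neg hcpos.le, Real.rpow_neg hvpos.le]
      apply inv_anti₀ (Real.rpow_pos_of_pos hcpos _)
      exact Real.rpow_le_rpow hcpos.le (by nlinarith [hc.2]) hb0.le
    have hvu : v - u ≠ 0 := sub_ne_zero.2 (ne_of_gt huv)
    rw [eq_div_iff hvu] at hceq
    rw [← hceq]
    apply mul_le_mul_of_nonneg_right hmono (by linarith)
  -- continuity of g
  have hgcont : ContinuousOn g (Set.Icc t₀ t₁) := by
    have : IntegrableOn h (Set.Icc t₀ t₁) := by
      rwa [integrableOn_Icc_iff_integrableOn_Ioc]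
    exact intervalIntegral.continuousOn_primitive this
  -- the comparison function F
  set F : ℝ → ℝ := fun t => Real.log t - Φ (g t) with hF_def
  have hFcont : ContinuousOn F (Set.Icc t₀ t₁) := by
    apply ContinuousOn.sub
    · intro t ht
      exact (Real.continuousAt_log (ne_of_gt (lt_of_lt_of_le ht₀ ht.1))).continuousWithinAt
    · exact fun t ht =>
        (hΦcont (g t) (hgnonneg t ht.1 ht.2)).comp_continuousWithinAt (hgcont t ht)
  -- slope bound
  have hslope : ∀ x ∈ Set.Ico t₀ t₁, ∀ r : ℝ, (0:ℝ) < r →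
      ∃ᶠ z in nhdsWithin x (Set.Ioi x), slope F x z < r := by
    intro x hx r hr
    have hxpos : 0 < x := lt_of_lt_of_le ht₀ hx.1
    have hgx0 : 0 ≤ g x := hgnonneg x hx.1 hx.2.le
    have hax : 0 < a₁ + a₂ * g x := by nlinarith
    have hgten : Filter.Tendsto g (nhdsWithin x (Set.Ioi x)) (nhds (g x)) := by
      have h1 : ContinuousWithinAt g (Set.Icc t₀ t₁) x :=
        hgcont x ⟨hx.1, hx.2.le⟩
      apply h1.mono_of_mem_nhdsWithin
      apply Filter.mem_of_superset (Ioo_mem_nhdsGT hx.2)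
      exact fun z hz => ⟨le_trans hx.1 hz.1.le, hz.2.le⟩
    have hψten : Filter.Tendsto
        (fun z => (a₁ + a₂ * g x) ^ b * (a₁ + a₂ * g z) ^ (-b) / z)
        (nhdsWithin x (Set.Ioi x)) (nhds x⁻¹) := by
      have h1 : Filter.Tendsto (fun z => a₁ + a₂ * g z)
          (nhdsWithin x (Set.Ioi x)) (nhds (a₁ + a₂ * g x)) :=
        (Filter.Tendsto.const_mul a₂ hgten).const_add a₁
      have h2 : Filter.Tendsto (fun z => (a₁ + a₂ * g z) ^ (-b))
          (nhdsWithin x (Set.Ioi x)) (nhds ((a₁ + a₂ * g x) ^ (-b))) :=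
        h1.rpow_const (Or.inl hax.ne')
      have h3 : Filter.Tendsto (fun z : ℝ => z⁻¹)
          (nhdsWithin x (Set.Ioi x)) (nhds x⁻¹) :=
        (Filter.tendsto_id.inv₀ hxpos.ne').mono_left nhdsWithin_le_nhds
      have h4 := (h2.const_mul ((a₁ + a₂ * g x) ^ b)).mul h3
      have heq : (a₁ + a₂ * g x) ^ b * (a₁ + a₂ * g x) ^ (-b) * x⁻¹ = x⁻¹ := by
        rw [← Real.rpow_add hax, add_neg_cancel, Real.rpow_zero, one_mul]
      rw [heq] at h4
      simpa [div_eq_mul_inv] using h4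
    have hlogten : Filter.Tendsto (fun z => slope Real.log x z)
        (nhdsWithin x (Set.Ioi x)) (nhds x⁻¹) := by
      have := hasDerivAt_iff_tendsto_slope.1 (Real.hasDerivAt_log hxpos.ne')
      exact this.mono_left (nhdsWithin_mono x fun z hz => ne_of_gt hz)
    have hdiff : Filter.Tendsto
        (fun z => slope Real.log x z
          - (a₁ + a₂ * g x) ^ b * (a₁ + a₂ * g z) ^ (-b) / z)
        (nhdsWithin x (Set.Ioi x)) (nhds (x⁻¹ - x⁻¹)) := hlogten.sub hψten
    rw [sub_self] at hdiff
    have hev : ∀ᶠ z in nhdsWithin x (Set.Ioi x),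
        slope Real.log x z
          - (a₁ + a₂ * g x) ^ b * (a₁ + a₂ * g z) ^ (-b) / z < r :=
      hdiff.eventually (eventually_lt_nhds hr)
    have hmem : ∀ᶠ z in nhdsWithin x (Set.Ioi x), z ∈ Set.Ioo x t₁ :=
      Ioo_mem_nhdsGT hx.2
    apply Filter.Eventually.frequently
    filter_upwards [hev, hmem] with z hz hzmem
    have hxz : x < z := hzmem.1
    have hzt₁ : z ≤ t₁ := hzmem.2.le
    have hzpos : 0 < z := lt_trans hxpos hxz
    have hzx : (0:ℝ) < z - x := by linarith
    have hk := hkey x z hx.1 hxz hzt₁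
    have hgxz : g x < g z := by
      have : 0 < (a₁ + a₂ * g x) ^ b * ((z - x) / z) := by
        apply mul_pos (Real.rpow_pos_of_pos hax _)
        exact div_pos (by linarith) hzpos
      linarith
    have hΦs := hΦslope (g x) (g z) hgx0 hgxz
    have hΦge : (a₁ + a₂ * g z) ^ (-b) * ((a₁ + a₂ * g x) ^ b * ((z - x)/z))
        ≤ Φ (g z) - Φ (g x) := by
      calc (a₁ + a₂ * g z) ^ (-b) * ((a₁ + a₂ * g x) ^ b * ((z - x)/z))
          ≤ (a₁ + a₂ * g z) ^ (-b) * (g z - g x) := by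
            apply mul_le_mul_of_nonneg_left hk
            apply Real.rpow_nonneg (by nlinarith)
        _ ≤ Φ (g z) - Φ (g x) := hΦs
    have e1 : slope F x z = slope Real.log x z - (Φ (g z) - Φ (g x)) / (z - x) := by
      rw [slope_def_field, slope_def_field, hF_def]
      ring
    have e2 : (a₁ + a₂ * g x) ^ b * (a₁ + a₂ * g z) ^ (-b) / z
        ≤ (Φ (g z) - Φ (g x)) / (z - x) := by
      rw [le_div_iff₀ hzx]
      calc (a₁ + a₂ * g x) ^ b * (a₁ + a₂ * g z) ^ (-b) / z * (z - x)
          = (a₁ + a₂ * g z) ^ (-b) * ((a₁ + a₂ * g x) ^ b * ((z - x)/z)) := by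
            ring
        _ ≤ Φ (g z) - Φ (g x) := hΦge
    have hslopeF : slope F x z ≤ slope Real.log x z
        - (a₁ + a₂ * g x) ^ b * (a₁ + a₂ * g z) ^ (-b) / z := by
      rw [e1]; linarith
    exact lt_of_le_of_lt hslopeF hz
  -- apply the fencing theorem
  have hmain : F t₁ ≤ F t₀ := by
    have := image_le_of_liminf_slope_right_le_deriv_boundary
      (f := F) (a := t₀) (b := t₁) hFcont (B := fun _ => F t₀)
      (B' := fun _ => (0:ℝ)) le_rfl continuousOn_const
      (fun x _ => hasDerivWithinAt_const x _ _) hslope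
    exact this ⟨ht₀t₁.le, le_rfl⟩
  -- extract the quantitative bound
  have hΦ0 : Φ 0 = -(a₂ * (b-1))⁻¹ * a₁ ^ (1 - b) := by
    simp only [hΦ_def, mul_zero, add_zero]
  have hΦt₁ : Φ (g t₁) ≤ 0 := by
    have he : Φ (g t₁) = -(a₂ * (b-1))⁻¹ * (a₁ + a₂ * g t₁) ^ (1 - b) := by
      rw [hΦ_def]
    rw [he]
    apply mul_nonpos_of_nonpos_of_nonneg
    · have : (0:ℝ) < (a₂ * (b-1))⁻¹ := by positivity
      linarith
    · exact Real.rpow_nonneg (by nlinarith [hgnonneg t₁ ht₀t₁.le le_rfl]) _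
  have hlogineq : Real.log t₁ - Real.log t₀ ≤ (a₂ * (b-1))⁻¹ * a₁ ^ (1 - b) := by
    have h1 := hmain
    simp only [hF_def] at h1
    rw [hg_t₀, hΦ0] at h1
    linarith
  set L : ℝ := Real.log (T / (2 * t₀)) with hL_def
  have hLpos : 0 < L := by
    apply Real.log_pos
    rw [lt_div_iff₀ (by positivity)]
    linarith
  have hLle : L ≤ (a₂ * (b-1))⁻¹ * a₁ ^ (1 - b) := by
    have h1 : T / (2 * t₀) ≤ t₁ / t₀ := by
      rw [div_le_div_iff₀ (by positivity) ht₀]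
      nlinarith [mul_nonneg ht₀.le (sub_nonneg.2 ht₁.1.le)]
    have h2 : L ≤ Real.log (t₁ / t₀) :=
      Real.log_le_log (by positivity) h1
    rw [Real.log_div ht₁pos.ne' ht₀.ne'] at h2
    linarith
  -- final arithmetic
  set A : ℝ := a₂ * (b - 1) with hA_def
  have hApos : 0 < A := by positivity
  set K : ℝ := a₁ ^ (b - 1) with hK_def
  have hKpos : 0 < K := Real.rpow_pos_of_pos ha₁ _
  have hinv : a₁ ^ (1 - b) = K⁻¹ := by
    rw [hK_def, ← Real.rpow_neg ha₁.le]
    norm_num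
  rw [hinv] at hLle
  have hKle : K ≤ (A * L)⁻¹ := by
    rw [← one_div, le_div_iff₀ (by positivity)]
    have := mul_le_mul_of_nonneg_left hLle (by positivity : (0:ℝ) ≤ K * A)
    calc K * (A * L) = K * A * L := by ring
      _ ≤ K * A * (A⁻¹ * K⁻¹) := this
      _ = 1 := by
          field_simp
  have hstep : K ^ (b-1)⁻¹ ≤ ((A * L)⁻¹) ^ (b-1)⁻¹ :=
    Real.rpow_le_rpow hKpos.le hKle (by positivity)
  have ha₁eq : K ^ (b-1)⁻¹ = a₁ := by
    rw [hK_def, ← Real.rpow_mul ha₁.le, mul_inv_cancel₀ hb1.ne', Real.rpow_one]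
  have hh := le_trans ha₁eq.ge hstep
  have hexp : -(1:ℝ) / (b - 1) = -((b-1)⁻¹) := by
    rw [neg_div, one_div]
  have hrw : ((A * L)⁻¹) ^ (b-1)⁻¹
      = A ^ (-(1:ℝ) / (b-1)) * L ^ (-(1:ℝ) / (b-1)) := by
    rw [Real.inv_rpow (by positivity), ← Real.rpow_neg (by positivity),
      Real.mul_rpow hApos.le hLpos.le, hexp]
  rw [hrw] at hh
  exact hh
end
end

section
/- Subordination kernel decay transfer: suppose φ : (0,∞) × (0,∞) → [0,∞) satisfies φ_t(s) ≤ C t s^{-1-α/2} for all s,t > 0 and ∫₀^∞ s^{-γ} φ_1(s) ds < ∞ for all γ > 0, with φ_t(s) = t^{-2/α} φ_1(s t^{-2/α}); and suppose h(η,t) ≤ C₂ t^{-Q/2} exp(−|η|²_{ℍ^N}/(c₂ t)). Then the subordinated kernel G(η,t) := ∫₀^∞ h(η,s) φ_t(s) ds satisfies G(η,t) ≤ C t^{-Q/α} (1 + |η|_{ℍ^N}/t^{1/α})^{-(Q+α)} for all η ∈ ℍ^N and t > 0. -/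
open MeasureTheory Set

noncomputable section

/-- Scaling substitution for lower Lebesgue integrals over `Ioi 0`. -/
lemma lintegral_comp_mul_Ioi (f : ℝ → ENNReal) {c : ℝ} (hc : 0 < c) :
    ∫⁻ x in Ioi (0:ℝ), f (c * x) = ENNReal.ofReal c⁻¹ * ∫⁻ x in Ioi (0:ℝ), f x := by
  have hme : MeasurableEmbedding (fun x : ℝ => c * x) :=
    (Homeomorph.mulLeft₀ c hc.ne').measurableEmbedding
  have hpre : (c * ·) ⁻¹' (Ioi (0:ℝ)) = Ioi 0 := by
    ext x
    simp only [mem_preimage, mem_Ioi]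
    exact mul_pos_iff_of_pos_left hc
  calc ∫⁻ x in Ioi (0:ℝ), f (c * x)
      = ∫⁻ y, f y ∂(Measure.map (c * ·) (volume.restrict (Ioi 0))) := by
        rw [hme.lintegral_map]
    _ = ∫⁻ y, f y ∂((Measure.map (c * ·) volume).restrict (Ioi 0)) := by
        rw [Measure.restrict_map hme.measurable measurableSet_Ioi, hpre]
    _ = ENNReal.ofReal c⁻¹ * ∫⁻ x in Ioi (0:ℝ), f x := by
        rw [Real.map_volume_mul_left hc.ne', Measure.restrict_smul, lintegral_smul_measure,
          abs_of_pos (inv_pos.mpr hc), smul_eq_mul]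

lemma exp_neg_le_aux (n : ℕ) {y : ℝ} (hy : 0 < y) :
    Real.exp (-y) ≤ (n.factorial : ℝ) / y ^ n := by
  have h1 : y ^ n / (n.factorial : ℝ) ≤ Real.exp y := by
    calc y ^ n / (n.factorial : ℝ)
        ≤ ∑ i ∈ Finset.range (n + 1), y ^ i / (i.factorial : ℝ) := by
          exact Finset.single_le_sum (f := fun i => y ^ i / (i.factorial : ℝ))
            (fun i _ => by positivity) (Finset.self_mem_range_succ n)
      _ ≤ Real.exp y := Real.sum_le_exp_of_nonneg hy.le _
  have hpow : (0:ℝ) < y ^ n / (n.factorial : ℝ) := by positivity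
  rw [Real.exp_neg]
  have h2 : (Real.exp y)⁻¹ ≤ (y ^ n / (n.factorial : ℝ))⁻¹ := inv_anti₀ hpow h1
  rwa [inv_div] at h2

lemma J_lt_top {k c₂ : ℝ} (hk : 0 < k) (hc₂ : 0 < c₂) :
    ∫⁻ x in Ioi (0:ℝ), ENNReal.ofReal (x ^ (-(k+1)) * Real.exp (-(1/(c₂ * x)))) < ⊤ := by
  have hsplit : Ioi (0:ℝ) = Ioc (0:ℝ) 1 ∪ Ioi 1 := (Ioc_union_Ioi_eq_Ioi zero_le_one).symm
  rw [hsplit, lintegral_union measurableSet_Ioi Ioc_disjoint_Ioi_same]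
  have h1 : ∫⁻ x in Ioc (0:ℝ) 1, ENNReal.ofReal (x ^ (-(k+1)) * Real.exp (-(1/(c₂ * x)))) < ⊤ := by
    set n : ℕ := ⌈k⌉₊ + 1 with hn
    have hnk : (k + 1) ≤ (n : ℝ) := by
      have := Nat.le_ceil k
      push_cast [hn]
      linarith
    have hb : ∀ x ∈ Ioc (0:ℝ) 1,
        ENNReal.ofReal (x ^ (-(k+1)) * Real.exp (-(1/(c₂ * x)))) ≤
          ENNReal.ofReal ((n.factorial : ℝ) * c₂ ^ n) := by
      intro x hx
      obtain ⟨hx0, hx1⟩ := hx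
      refine ENNReal.ofReal_le_ofReal ?_
      have hy : (0:ℝ) < 1/(c₂ * x) := by positivity
      have he : Real.exp (-(1/(c₂ * x))) ≤ (n.factorial : ℝ) / (1/(c₂*x)) ^ n :=
        exp_neg_le_aux n hy
      have he2 : (n.factorial : ℝ) / (1/(c₂*x)) ^ n = (n.factorial : ℝ) * (c₂*x) ^ n := by
        rw [one_div, inv_pow, div_eq_mul_inv, inv_inv]
      have hxe : x ^ (-(k+1)) * x ^ ((n:ℕ):ℝ) = x ^ ((n:ℝ) - (k+1)) := by
        rw [← Real.rpow_add hx0]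
        ring_nf
      have hle1 : x ^ ((n:ℝ) - (k+1)) ≤ 1 :=
        Real.rpow_le_one hx0.le hx1 (by linarith)
      calc x ^ (-(k+1)) * Real.exp (-(1/(c₂ * x)))
          ≤ x ^ (-(k+1)) * ((n.factorial : ℝ) * (c₂*x)^n) := by
            rw [← he2]
            exact mul_le_mul_of_nonneg_left he (Real.rpow_nonneg hx0.le _)
        _ = (n.factorial : ℝ) * c₂ ^ n * (x ^ (-(k+1)) * x ^ ((n:ℕ):ℝ)) := by
            rw [Real.rpow_natCast x n, mul_pow]
            ring
        _ ≤ (n.factorial : ℝ) * c₂ ^ n * 1 := by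
            rw [hxe]
            exact mul_le_mul_of_nonneg_left hle1 (by positivity)
        _ = (n.factorial : ℝ) * c₂ ^ n := mul_one _
    calc ∫⁻ x in Ioc (0:ℝ) 1, ENNReal.ofReal (x ^ (-(k+1)) * Real.exp (-(1/(c₂ * x))))
        ≤ ∫⁻ _x in Ioc (0:ℝ) 1, ENNReal.ofReal ((n.factorial : ℝ) * c₂ ^ n) :=
          setLIntegral_mono' measurableSet_Ioc hb
      _ = ENNReal.ofReal ((n.factorial : ℝ) * c₂ ^ n) * volume (Ioc (0:ℝ) 1) :=
          setLIntegral_const _ _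
      _ < ⊤ := by
          rw [Real.volume_Ioc]
          exact ENNReal.mul_lt_top ENNReal.ofReal_lt_top ENNReal.ofReal_lt_top
  have h2 : ∫⁻ x in Ioi (1:ℝ), ENNReal.ofReal (x ^ (-(k+1)) * Real.exp (-(1/(c₂ * x)))) < ⊤ := by
    have hint : IntegrableOn (fun x : ℝ => x ^ (-(k+1))) (Ioi 1) :=
      integrableOn_Ioi_rpow_of_lt (by linarith) one_pos
    calc ∫⁻ x in Ioi (1:ℝ), ENNReal.ofReal (x ^ (-(k+1)) * Real.exp (-(1/(c₂ * x))))
        ≤ ∫⁻ x in Ioi (1:ℝ), ENNReal.ofReal (x ^ (-(k+1))) := by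
          refine setLIntegral_mono' measurableSet_Ioi fun x hx => ENNReal.ofReal_le_ofReal ?_
          have hx0 : (0:ℝ) < x := lt_trans one_pos hx
          have hexp : Real.exp (-(1/(c₂*x))) ≤ 1 := by
            rw [Real.exp_le_one_iff]
            have : (0:ℝ) ≤ 1/(c₂*x) := by positivity
            linarith
          calc x ^ (-(k+1)) * Real.exp (-(1/(c₂ * x)))
              ≤ x ^ (-(k+1)) * 1 :=
                mul_le_mul_of_nonneg_left hexp (Real.rpow_nonneg hx0.le _)
            _ = x ^ (-(k+1)) := mul_one _
      _ < ⊤ := hint.setLIntegral_lt_top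
  exact ENNReal.add_lt_top.mpr ⟨h1, h2⟩

/-- Subordination transfers a Gaussian upper bound for `h` into an α-stable
upper bound for the subordinated kernel `G(η,t) = ∫₀^∞ h(η,s) φ_t(s) ds`. -/
theorem stmt_15 (N : ℕ) (hN : 1 ≤ N) (α Cφ C₂ c₂ : ℝ)
    (hα : 0 < α) (hα2 : α < 2) (hCφ : 0 < Cφ) (hC₂ : 0 < C₂) (hc₂ : 0 < c₂)
    (φ : ℝ → ℝ → ℝ) (h : H N → ℝ → ℝ)
    (hφ0 : ∀ t s : ℝ, 0 < t → 0 < s → 0 ≤ φ t s)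
    (hφub : ∀ t s : ℝ, 0 < t → 0 < s → φ t s ≤ Cφ * t * s ^ (-(1 + α / 2)))
    (hφscale : ∀ t s : ℝ, 0 < t → 0 < s →
      φ t s = t ^ (-(2 / α)) * φ 1 (s * t ^ (-(2 / α))))
    (hφmom : ∀ γ : ℝ, 0 < γ →
      ∫⁻ s in Set.Ioi (0 : ℝ), ENNReal.ofReal (s ^ (-γ) * φ 1 s) < ⊤)
    (hh0 : ∀ (η : H N) (t : ℝ), 0 < t → 0 ≤ h η t)
    (hhub : ∀ (η : H N) (t : ℝ), 0 < t →
      h η t ≤ C₂ * t ^ (-(2 * N + 2 : ℝ) / 2) *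
        Real.exp (-(hnorm η) ^ 2 / (c₂ * t))) :
    ∃ C : ℝ, 0 < C ∧ ∀ (η : H N) (t : ℝ), 0 < t →
      ∫⁻ s in Set.Ioi (0 : ℝ), ENNReal.ofReal (h η s * φ t s)
        ≤ ENNReal.ofReal (C * t ^ (-(2 * N + 2 : ℝ) / α) *
            (1 + hnorm η / t ^ (1 / α)) ^ (-((2 * N + 2 : ℝ) + α))) := by
  have hα' : α ≠ 0 := hα.ne'
  set Q : ℝ := 2 * (N:ℝ) + 2 with hQdef
  have hQpos : 0 < Q := by rw [hQdef]; positivity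
  set k : ℝ := (Q + α) / 2 with hkdef
  have hkpos : 0 < k := by rw [hkdef]; linarith
  set e : ℝ := Q + α with hedef
  have hepos : 0 < e := by rw [hedef]; linarith
  set M : ENNReal := ∫⁻ s in Ioi (0:ℝ), ENNReal.ofReal (s ^ (-(Q/2)) * φ 1 s) with hMdef
  have hM : M < ⊤ := by rw [hMdef]; exact hφmom (Q/2) (by linarith)
  set J : ENNReal := ∫⁻ x in Ioi (0:ℝ),
      ENNReal.ofReal (x ^ (-(k+1)) * Real.exp (-(1/(c₂ * x)))) with hJdef
  have hJ : J < ⊤ := by rw [hJdef]; exact J_lt_top hkpos hc₂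
  have hMt : 0 ≤ M.toReal := ENNReal.toReal_nonneg
  have hJt : 0 ≤ J.toReal := ENNReal.toReal_nonneg
  set D : ℝ := C₂ * M.toReal + C₂ * Cφ * J.toReal + 1 with hDdef
  have hD : 0 < D := by
    rw [hDdef]
    nlinarith [mul_nonneg hC₂.le hMt, mul_nonneg (mul_nonneg hC₂.le hCφ.le) hJt]
  have h2e : (2:ℝ) ^ e * (2:ℝ) ^ (-e) = 1 := by
    rw [← Real.rpow_add two_pos]
    simp
  refine ⟨2 ^ e * D, by positivity, fun η t ht => ?_⟩
  set r : ℝ := hnorm η with hrdef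
  have hr0 : 0 ≤ r := by
    rw [hrdef, hnorm]
    positivity
  set T : ℝ := t ^ (1/α) with hTdef
  have hT0 : 0 < T := by rw [hTdef]; exact Real.rpow_pos_of_pos ht _
  have htq : (0:ℝ) < t ^ (-Q/α) := Real.rpow_pos_of_pos ht _
  -- Bound A : always
  have boundA : ∫⁻ s in Ioi (0:ℝ), ENNReal.ofReal (h η s * φ t s)
      ≤ ENNReal.ofReal (C₂ * t ^ (-Q/α) * M.toReal) := by
    set c : ℝ := t ^ (-(2/α)) with hcdef
    have hc : 0 < c := by rw [hcdef]; exact Real.rpow_pos_of_pos ht _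
    have hK : (0:ℝ) ≤ C₂ * c ^ (Q/2+1) :=
      mul_nonneg hC₂.le (Real.rpow_nonneg hc.le _)
    have step1 : ∀ s ∈ Ioi (0:ℝ), ENNReal.ofReal (h η s * φ t s) ≤
        ENNReal.ofReal (C₂ * c ^ (Q/2+1) * ((c*s) ^ (-(Q/2)) * φ 1 (c*s))) := by
      intro s hs
      rw [mem_Ioi] at hs
      refine ENNReal.ofReal_le_ofReal ?_
      have hb := hhub η s hs
      rw [← hrdef] at hb
      have e1 : h η s ≤ C₂ * s ^ (-(Q/2)) := by
        have hexp : Real.exp (-r ^ 2 / (c₂*s)) ≤ 1 := by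
          rw [Real.exp_le_one_iff]
          exact div_nonpos_iff.mpr (Or.inr ⟨neg_nonpos.mpr (sq_nonneg r), by positivity⟩)
        calc h η s ≤ C₂ * s ^ (-Q/2) * Real.exp (-r ^ 2 / (c₂*s)) := hb
          _ ≤ C₂ * s ^ (-Q/2) * 1 := by
              refine mul_le_mul_of_nonneg_left hexp ?_
              exact mul_nonneg hC₂.le (Real.rpow_nonneg hs.le _)
          _ = C₂ * s ^ (-(Q/2)) := by rw [mul_one, neg_div]
      have e2 : h η s * φ t s ≤ C₂ * s ^ (-(Q/2)) * φ t s :=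
        mul_le_mul_of_nonneg_right e1 (hφ0 t s ht hs)
      have e3 : φ t s = c * φ 1 (c * s) := by
        rw [hφscale t s ht hs, mul_comm s _]
      have e4 : (c*s) ^ (-(Q/2)) = c ^ (-(Q/2)) * s ^ (-(Q/2)) :=
        Real.mul_rpow hc.le hs.le
      have e6 : c ^ (Q/2+1) * c ^ (-(Q/2)) = c := by
        rw [← Real.rpow_add hc, show Q/2+1 + -(Q/2) = 1 from by ring, Real.rpow_one]
      calc h η s * φ t s ≤ C₂ * s ^ (-(Q/2)) * (c * φ 1 (c*s)) := by rw [← e3]; exact e2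
        _ = C₂ * c ^ (Q/2+1) * ((c*s) ^ (-(Q/2)) * φ 1 (c*s)) := by
            rw [e4, show C₂ * c ^ (Q/2+1) * (c ^ (-(Q/2)) * s ^ (-(Q/2)) * φ 1 (c*s))
                = C₂ * (c ^ (Q/2+1) * c ^ (-(Q/2))) * (s ^ (-(Q/2)) * φ 1 (c*s)) from by ring,
              e6]
            ring
    have hsub : ∫⁻ s in Ioi (0:ℝ), ENNReal.ofReal ((c*s) ^ (-(Q/2)) * φ 1 (c*s))
        = ENNReal.ofReal c⁻¹ * M := by
      rw [hMdef]
      exact lintegral_comp_mul_Ioi (fun x => ENNReal.ofReal (x ^ (-(Q/2)) * φ 1 x)) hc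
    have key : ∫⁻ s in Ioi (0:ℝ), ENNReal.ofReal (h η s * φ t s)
        ≤ ENNReal.ofReal (C₂ * c ^ (Q/2+1)) * (ENNReal.ofReal c⁻¹ * M) := by
      calc ∫⁻ s in Ioi (0:ℝ), ENNReal.ofReal (h η s * φ t s)
          ≤ ∫⁻ s in Ioi (0:ℝ),
              ENNReal.ofReal (C₂ * c ^ (Q/2+1) * ((c*s) ^ (-(Q/2)) * φ 1 (c*s))) :=
            setLIntegral_mono' measurableSet_Ioi step1
        _ = ENNReal.ofReal (C₂ * c ^ (Q/2+1)) *
              ∫⁻ s in Ioi (0:ℝ), ENNReal.ofReal ((c*s) ^ (-(Q/2)) * φ 1 (c*s)) := by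
            simp_rw [ENNReal.ofReal_mul hK]
            rw [lintegral_const_mul' _ _ ENNReal.ofReal_ne_top]
        _ = ENNReal.ofReal (C₂ * c ^ (Q/2+1)) * (ENNReal.ofReal c⁻¹ * M) := by rw [hsub]
    have hcQ : C₂ * c ^ (Q/2+1) * (c⁻¹ * M.toReal) = C₂ * t ^ (-Q/α) * M.toReal := by
      have h1 : c ^ (Q/2+1) * c⁻¹ = t ^ (-Q/α) := by
        rw [← Real.rpow_neg_one c, ← Real.rpow_add hc,
          show Q/2+1 + (-1) = Q/2 from by ring, hcdef, ← Real.rpow_mul ht.le,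
          show -(2/α) * (Q/2) = -Q/α from by field_simp]
      calc C₂ * c ^ (Q/2+1) * (c⁻¹ * M.toReal)
          = C₂ * (c ^ (Q/2+1) * c⁻¹) * M.toReal := by ring
        _ = C₂ * t ^ (-Q/α) * M.toReal := by rw [h1]
    calc ∫⁻ s in Ioi (0:ℝ), ENNReal.ofReal (h η s * φ t s)
        ≤ ENNReal.ofReal (C₂ * c ^ (Q/2+1)) * (ENNReal.ofReal c⁻¹ * M) := key
      _ = ENNReal.ofReal (C₂ * c ^ (Q/2+1) * (c⁻¹ * M.toReal)) := by
          rw [ENNReal.ofReal_mul hK, ENNReal.ofReal_mul (inv_pos.mpr hc).le,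
            ENNReal.ofReal_toReal hM.ne]
      _ = ENNReal.ofReal (C₂ * t ^ (-Q/α) * M.toReal) := by rw [hcQ]
  -- Bound B : when r > 0
  have boundB : 0 < r → ∫⁻ s in Ioi (0:ℝ), ENNReal.ofReal (h η s * φ t s)
      ≤ ENNReal.ofReal (C₂ * Cφ * t * r ^ (-e) * J.toReal) := by
    intro hrpos
    set c : ℝ := (r^2)⁻¹ with hcdef
    have hc : 0 < c := by rw [hcdef]; positivity
    have hK : (0:ℝ) ≤ C₂ * Cφ * t * c ^ (k+1) :=
      mul_nonneg (mul_nonneg (mul_nonneg hC₂.le hCφ.le) ht.le) (Real.rpow_nonneg hc.le _)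
    have step1 : ∀ s ∈ Ioi (0:ℝ), ENNReal.ofReal (h η s * φ t s) ≤
        ENNReal.ofReal (C₂ * Cφ * t * c ^ (k+1) *
          ((c*s) ^ (-(k+1)) * Real.exp (-(1/(c₂*(c*s)))))) := by
      intro s hs
      rw [mem_Ioi] at hs
      refine ENNReal.ofReal_le_ofReal ?_
      have hb := hhub η s hs
      rw [← hrdef] at hb
      have e1 : h η s * φ t s ≤
          (C₂ * s ^ (-Q/2) * Real.exp (-r ^ 2 / (c₂*s))) * (Cφ * t * s ^ (-(1+α/2))) :=
        mul_le_mul hb (hφub t s ht hs) (hφ0 t s ht hs)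
          (mul_nonneg (mul_nonneg hC₂.le (Real.rpow_nonneg hs.le _)) (Real.exp_pos _).le)
      have e2 : (c*s) ^ (-(k+1)) = c ^ (-(k+1)) * s ^ (-(k+1)) :=
        Real.mul_rpow hc.le hs.le
      have e3 : c ^ (k+1) * c ^ (-(k+1)) = 1 := by
        rw [← Real.rpow_add hc, show k+1 + -(k+1) = 0 from by ring, Real.rpow_zero]
      have e4 : s ^ (-Q/2) * s ^ (-(1+α/2)) = s ^ (-(k+1)) := by
        rw [← Real.rpow_add hs]
        congr 1
        rw [hkdef, hedef]
        ring
      have e5 : -r ^ 2 / (c₂*s) = -(1/(c₂*(c*s))) := by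
        rw [hcdef]
        field_simp
      calc h η s * φ t s
          ≤ (C₂ * s ^ (-Q/2) * Real.exp (-r ^ 2 / (c₂*s))) * (Cφ * t * s ^ (-(1+α/2))) := e1
        _ = C₂ * Cφ * t * (s ^ (-Q/2) * s ^ (-(1+α/2))) * Real.exp (-r ^ 2 / (c₂*s)) := by
            ring
        _ = C₂ * Cφ * t * s ^ (-(k+1)) * Real.exp (-(1/(c₂*(c*s)))) := by rw [e4, e5]
        _ = C₂ * Cφ * t * c ^ (k+1) *
              ((c*s) ^ (-(k+1)) * Real.exp (-(1/(c₂*(c*s))))) := by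
            rw [e2, show C₂ * Cφ * t * c ^ (k+1) *
                (c ^ (-(k+1)) * s ^ (-(k+1)) * Real.exp (-(1/(c₂*(c*s)))))
                = C₂ * Cφ * t * (c ^ (k+1) * c ^ (-(k+1))) *
                  (s ^ (-(k+1)) * Real.exp (-(1/(c₂*(c*s))))) from by ring, e3]
            ring
    have hsub : ∫⁻ s in Ioi (0:ℝ), ENNReal.ofReal ((c*s) ^ (-(k+1)) *
        Real.exp (-(1/(c₂*(c*s))))) = ENNReal.ofReal c⁻¹ * J := by
      rw [hJdef]
      exact lintegral_comp_mul_Ioi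
        (fun x => ENNReal.ofReal (x ^ (-(k+1)) * Real.exp (-(1/(c₂*x))))) hc
    have key : ∫⁻ s in Ioi (0:ℝ), ENNReal.ofReal (h η s * φ t s)
        ≤ ENNReal.ofReal (C₂ * Cφ * t * c ^ (k+1)) * (ENNReal.ofReal c⁻¹ * J) := by
      calc ∫⁻ s in Ioi (0:ℝ), ENNReal.ofReal (h η s * φ t s)
          ≤ ∫⁻ s in Ioi (0:ℝ), ENNReal.ofReal (C₂ * Cφ * t * c ^ (k+1) *
              ((c*s) ^ (-(k+1)) * Real.exp (-(1/(c₂*(c*s)))))) :=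
            setLIntegral_mono' measurableSet_Ioi step1
        _ = ENNReal.ofReal (C₂ * Cφ * t * c ^ (k+1)) *
              ∫⁻ s in Ioi (0:ℝ), ENNReal.ofReal ((c*s) ^ (-(k+1)) *
                Real.exp (-(1/(c₂*(c*s))))) := by
            simp_rw [ENNReal.ofReal_mul hK]
            rw [lintegral_const_mul' _ _ ENNReal.ofReal_ne_top]
        _ = ENNReal.ofReal (C₂ * Cφ * t * c ^ (k+1)) * (ENNReal.ofReal c⁻¹ * J) := by
            rw [hsub]
    have hck : c ^ (k+1) * c⁻¹ = r ^ (-e) := by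
      have h1 : c ^ (k+1) * c⁻¹ = c ^ k := by
        rw [← Real.rpow_neg_one c, ← Real.rpow_add hc,
          show k+1 + (-1) = k from by ring]
      rw [h1, hcdef, show (r^2)⁻¹ = r ^ (-2:ℝ) from by
          rw [Real.rpow_neg hr0, Real.rpow_two],
        ← Real.rpow_mul hr0, show (-2:ℝ) * k = -e from by rw [hkdef, hedef]; ring]
    have hcJ : C₂ * Cφ * t * c ^ (k+1) * (c⁻¹ * J.toReal)
        = C₂ * Cφ * t * r ^ (-e) * J.toReal := by
      rw [show C₂ * Cφ * t * c ^ (k+1) * (c⁻¹ * J.toReal)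
          = C₂ * Cφ * t * (c ^ (k+1) * c⁻¹) * J.toReal from by ring, hck]
    calc ∫⁻ s in Ioi (0:ℝ), ENNReal.ofReal (h η s * φ t s)
        ≤ ENNReal.ofReal (C₂ * Cφ * t * c ^ (k+1)) * (ENNReal.ofReal c⁻¹ * J) := key
      _ = ENNReal.ofReal (C₂ * Cφ * t * c ^ (k+1) * (c⁻¹ * J.toReal)) := by
          rw [ENNReal.ofReal_mul hK, ENNReal.ofReal_mul (inv_pos.mpr hc).le,
            ENNReal.ofReal_toReal hJ.ne]
      _ = ENNReal.ofReal (C₂ * Cφ * t * r ^ (-e) * J.toReal) := by rw [hcJ]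
  -- now the case analysis
  have hrT : 0 ≤ r / T := div_nonneg hr0 hT0.le
  rcases le_or_gt r T with hcase | hcase
  · refine boundA.trans (ENNReal.ofReal_le_ofReal ?_)
    have h2 : (2:ℝ) ^ (-e) ≤ (1 + r/T) ^ (-e) := by
      refine Real.rpow_le_rpow_of_nonpos (by linarith) ?_ (by linarith)
      have : r / T ≤ 1 := (div_le_one hT0).mpr hcase
      linarith
    have hCM : C₂ * M.toReal ≤ D := by
      rw [hDdef]
      nlinarith [mul_nonneg (mul_nonneg hC₂.le hCφ.le) hJt]
    calc C₂ * t ^ (-Q/α) * M.toReal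
        = (C₂ * M.toReal) * t ^ (-Q/α) := by ring
      _ ≤ D * t ^ (-Q/α) := mul_le_mul_of_nonneg_right hCM htq.le
      _ = 2 ^ e * D * t ^ (-Q/α) * 2 ^ (-e) := by
          rw [show (2:ℝ) ^ e * D * t ^ (-Q/α) * 2 ^ (-e)
              = ((2:ℝ) ^ e * 2 ^ (-e)) * (D * t ^ (-Q/α)) from by ring, h2e, one_mul]
      _ ≤ 2 ^ e * D * t ^ (-Q/α) * (1 + r/T) ^ (-e) := by
          refine mul_le_mul_of_nonneg_left h2 ?_
          have h2epos : (0:ℝ) ≤ (2:ℝ) ^ e := (Real.rpow_pos_of_pos two_pos e).le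
          exact mul_nonneg (mul_nonneg h2epos hD.le) htq.le
  · have hrpos : 0 < r := hT0.trans hcase
    refine (boundB hrpos).trans (ENNReal.ofReal_le_ofReal ?_)
    have h1le : 1 ≤ r / T := (one_le_div hT0).mpr hcase.le
    have h1 : 1 + r/T ≤ 2 * (r/T) := by linarith
    have h2 : (2*(r/T)) ^ (-e) ≤ (1 + r/T) ^ (-e) :=
      Real.rpow_le_rpow_of_nonpos (by linarith) h1 (by linarith)
    have hTe : T ^ e = t ^ ((1/α)*e) := by rw [hTdef, ← Real.rpow_mul ht.le]
    have h3 : (2*(r/T)) ^ (-e) = 2 ^ (-e) * (r ^ (-e) * t ^ ((1/α)*e)) := by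
      rw [Real.mul_rpow (by norm_num) hrT, Real.div_rpow hr0 hT0.le,
        Real.rpow_neg hT0.le e, div_eq_mul_inv, inv_inv, hTe]
    have h4 : t ^ (-Q/α) * t ^ ((1/α)*e) = t := by
      rw [← Real.rpow_add ht, show -Q/α + (1/α)*e = 1 from by
          rw [hedef]; field_simp; ring, Real.rpow_one]
    have hCJ : C₂ * Cφ * J.toReal ≤ D := by
      rw [hDdef]
      nlinarith [mul_nonneg hC₂.le hMt]
    have hre : (0:ℝ) < r ^ (-e) := Real.rpow_pos_of_pos hrpos _
    calc C₂ * Cφ * t * r ^ (-e) * J.toReal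
        = (C₂ * Cφ * J.toReal) * (t * r ^ (-e)) := by ring
      _ ≤ D * (t * r ^ (-e)) := by
          refine mul_le_mul_of_nonneg_right hCJ ?_
          exact mul_nonneg ht.le hre.le
      _ = 2 ^ e * D * t ^ (-Q/α) * (2*(r/T)) ^ (-e) := by
          rw [h3, show (2:ℝ) ^ e * D * t ^ (-Q/α) * (2 ^ (-e) * (r ^ (-e) * t ^ ((1/α)*e)))
              = ((2:ℝ) ^ e * 2 ^ (-e)) * D * ((t ^ (-Q/α) * t ^ ((1/α)*e)) * r ^ (-e))
              from by ring, h2e, h4, one_mul]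
      _ ≤ 2 ^ e * D * t ^ (-Q/α) * (1 + r/T) ^ (-e) := by
          refine mul_le_mul_of_nonneg_left h2 ?_
          have h2epos : (0:ℝ) ≤ (2:ℝ) ^ e := (Real.rpow_pos_of_pos two_pos e).le
          exact mul_nonneg (mul_nonneg h2epos hD.le) htq.le
end
end

section
/- Lower bound transfer by subordination: suppose φ_t(s) ≥ c t s^{-1-α/2} for all s ≥ t^{2/α} > 0, and h(η,t) ≥ C₁ t^{-Q/2} exp(−|η|²_{ℍ^N}/(c₁ t)). Then G(η,t) := ∫₀^∞ h(η,s) φ_t(s) ds satisfies G(η,t) ≥ c' t^{-Q/α} (1 + |η|_{ℍ^N}/t^{1/α})^{-(Q+α)} for all η ∈ ℍ^N and t > 0, for some constant c' > 0 depending only on Q, α, c, C₁, c₁. -/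
open MeasureTheory Set

noncomputable section

theorem aux_stmt_16 (N : ℕ) (hN : 1 ≤ N) (α c C₁ c₁ : ℝ)
    (hα : 0 < α) (hα2 : α < 2) (hc : 0 < c) (hC₁ : 0 < C₁) (hc₁ : 0 < c₁)
    (φ : ℝ → ℝ → ℝ) (h : (EuclideanSpace ℝ (Fin N) × EuclideanSpace ℝ (Fin N) × ℝ) → ℝ → ℝ)
    (hφ0 : ∀ t s : ℝ, 0 < t → 0 < s → 0 ≤ φ t s)
    (hφlb : ∀ t s : ℝ, 0 < t → t ^ (2 / α) ≤ s →
      c * t * s ^ (-(1 + α / 2)) ≤ φ t s)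
    (hh0 : ∀ η (t : ℝ), 0 < t → 0 ≤ h η t)
    (hnorm : (EuclideanSpace ℝ (Fin N) × EuclideanSpace ℝ (Fin N) × ℝ) → ℝ)
    (hnorm_nonneg : ∀ η, 0 ≤ hnorm η)
    (hhlb : ∀ η (t : ℝ), 0 < t →
      C₁ * t ^ (-(2 * N + 2 : ℝ) / 2) *
        Real.exp (-(hnorm η) ^ 2 / (c₁ * t)) ≤ h η t) :
    ∃ c' : ℝ, 0 < c' ∧ ∀ η (t : ℝ), 0 < t →
      ENNReal.ofReal (c' * t ^ (-(2 * N + 2 : ℝ) / α) *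
          (1 + hnorm η / t ^ (1 / α)) ^ (-((2 * N + 2 : ℝ) + α)))
        ≤ ∫⁻ s in Set.Ioi (0 : ℝ), ENNReal.ofReal (h η s * φ t s) := by
  set Q : ℝ := 2 * N + 2 with hQdef
  have hQpos : 0 < Q := by positivity
  refine ⟨c * C₁ * Real.exp (-(1/c₁)) * (2:ℝ) ^ (-(Q + α + 2)/2), by positivity, ?_⟩
  intro η t ht
  set r : ℝ := hnorm η with hrdef
  have hr : 0 ≤ r := hnorm_nonneg η
  set u : ℝ := t ^ (1/α) with hudef
  have hu : 0 < u := Real.rpow_pos_of_pos ht _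
  set B : ℝ := u + r with hBdef
  have hB : 0 < B := by positivity
  set A : ℝ := B ^ 2 with hAdef
  have hA : 0 < A := by positivity
  have hAt : t ^ (2/α) ≤ A := by
    have h1 : t ^ (2/α) = u ^ 2 := by
      rw [hudef, ← Real.rpow_natCast (t ^ (1/α)) 2, ← Real.rpow_mul ht.le]
      congr 1; push_cast; ring
    rw [h1, hAdef]
    have : u ≤ B := by rw [hBdef]; linarith
    exact pow_le_pow_left₀ hu.le this 2
  set L : ℝ := (C₁ * (2*A) ^ (-Q/2) * Real.exp (-(1/c₁))) * (c * t * (2*A) ^ (-(1 + α/2))) with hLdef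
  have hL : 0 < L := by positivity
  -- pointwise bound on Ioc A (2A)
  have hpt : ∀ s ∈ Ioc A (2*A), L ≤ h η s * φ t s := by
    intro s hs
    have hs0 : 0 < s := lt_trans hA hs.1
    have hsA : s ≤ 2*A := hs.2
    have h2 : c * t * (2*A) ^ (-(1 + α/2)) ≤ φ t s := by
      refine le_trans ?_ (hφlb t s ht (le_trans hAt hs.1.le))
      have := Real.rpow_le_rpow_of_nonpos hs0 hsA (by linarith : -(1 + α/2) ≤ 0)
      nlinarith [mul_pos hc ht]
    have h1 : C₁ * (2*A) ^ (-Q/2) * Real.exp (-(1/c₁)) ≤ h η s := by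
      refine le_trans ?_ (hhlb η s hs0)
      have e1 : (2*A:ℝ) ^ (-Q/2) ≤ s ^ (-Q/2) :=
        Real.rpow_le_rpow_of_nonpos hs0 hsA (by linarith : -Q/2 ≤ 0)
      have e2 : Real.exp (-(1/c₁)) ≤ Real.exp (-(r ^ 2) / (c₁ * s)) := by
        apply Real.exp_le_exp.mpr
        rw [neg_div, neg_le_neg_iff, div_le_div_iff₀ (by positivity) hc₁]
        have hrB : r ^ 2 ≤ A := by
          rw [hAdef]; nlinarith
        nlinarith [le_trans hrB hs.1.le]
      calc C₁ * (2*A) ^ (-Q/2) * Real.exp (-(1/c₁))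
          ≤ C₁ * s ^ (-Q/2) * Real.exp (-(1/c₁)) := by
            apply mul_le_mul_of_nonneg_right (mul_le_mul_of_nonneg_left e1 hC₁.le) (Real.exp_pos _).le
        _ ≤ C₁ * s ^ (-Q/2) * Real.exp (-r ^ 2 / (c₁ * s)) := by
            apply mul_le_mul_of_nonneg_left e2 (by positivity)
    calc L = (C₁ * (2*A) ^ (-Q/2) * Real.exp (-(1/c₁))) * (c * t * (2*A) ^ (-(1 + α/2))) := hLdef
      _ ≤ h η s * φ t s := mul_le_mul h1 h2 (by positivity) (hh0 η s hs0)
  -- key equality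
  have hkey : c * C₁ * Real.exp (-(1/c₁)) * (2:ℝ) ^ (-(Q + α + 2)/2) * t ^ (-Q/α) *
      (1 + r / u) ^ (-(Q + α)) = L * A := by
    have hαne : α ≠ 0 := ne_of_gt hα
    have hBu : 1 + r / u = B / u := by rw [hBdef]; field_simp
    have e1 : (1 + r / u) ^ (-(Q + α)) = B ^ (-(Q + α)) * u ^ (Q + α) := by
      rw [hBu, Real.div_rpow hB.le hu.le, Real.rpow_neg hu.le, div_eq_mul_inv, inv_inv]
    have e2 : u ^ (Q + α) = t ^ ((Q + α)/α) := by
      rw [hudef, ← Real.rpow_mul ht.le]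
      congr 1; field_simp
    have e3 : t ^ (-Q/α) * t ^ ((Q + α)/α) = t := by
      rw [← Real.rpow_add ht]
      have : -Q/α + (Q + α)/α = 1 := by field_simp; ring
      rw [this, Real.rpow_one]
    have e4 : (2*A) ^ (-Q/2) * (2*A) ^ (-(1 + α/2)) = (2:ℝ) ^ (-(Q + α + 2)/2) * B ^ (-(Q + α + 2)) := by
      rw [← Real.rpow_add (by positivity), Real.mul_rpow (by norm_num) hA.le]
      congr 1
      · congr 1; ring
      · rw [hAdef, ← Real.rpow_natCast B 2, ← Real.rpow_mul hB.le]
        congr 1; push_cast; ring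
    have e5 : B ^ (-(Q + α + 2)) * A = B ^ (-(Q + α)) := by
      rw [hAdef, ← Real.rpow_natCast B 2, ← Real.rpow_add hB]
      congr 1; push_cast; ring
    rw [e1, e2, hLdef]
    calc c * C₁ * Real.exp (-(1/c₁)) * (2:ℝ) ^ (-(Q + α + 2)/2) * t ^ (-Q/α) *
        (B ^ (-(Q + α)) * t ^ ((Q + α)/α))
        = c * C₁ * Real.exp (-(1/c₁)) * (2:ℝ) ^ (-(Q + α + 2)/2) *
          (t ^ (-Q/α) * t ^ ((Q + α)/α)) * B ^ (-(Q + α)) := by ring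
      _ = c * C₁ * Real.exp (-(1/c₁)) * (2:ℝ) ^ (-(Q + α + 2)/2) * t * B ^ (-(Q + α)) := by rw [e3]
      _ = c * C₁ * Real.exp (-(1/c₁)) * t * ((2:ℝ) ^ (-(Q + α + 2)/2) * (B ^ (-(Q + α + 2)) * A)) := by
          rw [e5]; ring
      _ = c * C₁ * Real.exp (-(1/c₁)) * t * ((2*A) ^ (-Q/2) * (2*A) ^ (-(1 + α/2)) * A) := by
          rw [e4]; ring
      _ = C₁ * (2*A) ^ (-Q/2) * Real.exp (-(1/c₁)) * (c * t * (2*A) ^ (-(1 + α/2))) * A := by ring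
  calc ENNReal.ofReal (c * C₁ * Real.exp (-(1/c₁)) * (2:ℝ) ^ (-(Q + α + 2)/2) * t ^ (-Q/α) *
        (1 + r / u) ^ (-(Q + α)))
      = ENNReal.ofReal (L * A) := by rw [hkey]
    _ = ENNReal.ofReal L * ENNReal.ofReal A := ENNReal.ofReal_mul hL.le
    _ = ENNReal.ofReal L * volume (Ioc A (2*A)) := by
        rw [Real.volume_Ioc]; congr 1; congr 1; ring
    _ = ∫⁻ _ in Ioc A (2*A), ENNReal.ofReal L := (setLIntegral_const _ _).symm
    _ ≤ ∫⁻ s in Ioc A (2*A), ENNReal.ofReal (h η s * φ t s) :=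
        setLIntegral_mono' measurableSet_Ioc fun s hs => ENNReal.ofReal_le_ofReal (hpt s hs)
    _ ≤ ∫⁻ s in Set.Ioi (0:ℝ), ENNReal.ofReal (h η s * φ t s) :=
        lintegral_mono_set fun x hx => lt_trans hA hx.1


/-- Subordination transfers a Gaussian lower bound for `h` into an α-stable
lower bound for the subordinated kernel `G(η,t) = ∫₀^∞ h(η,s) φ_t(s) ds`. -/
theorem stmt_16 (N : ℕ) (hN : 1 ≤ N) (α c C₁ c₁ : ℝ)
    (hα : 0 < α) (hα2 : α < 2) (hc : 0 < c) (hC₁ : 0 < C₁) (hc₁ : 0 < c₁)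
    (φ : ℝ → ℝ → ℝ) (h : H N → ℝ → ℝ)
    (hφ0 : ∀ t s : ℝ, 0 < t → 0 < s → 0 ≤ φ t s)
    (hφlb : ∀ t s : ℝ, 0 < t → t ^ (2 / α) ≤ s →
      c * t * s ^ (-(1 + α / 2)) ≤ φ t s)
    (hh0 : ∀ (η : H N) (t : ℝ), 0 < t → 0 ≤ h η t)
    (hhlb : ∀ (η : H N) (t : ℝ), 0 < t →
      C₁ * t ^ (-(2 * N + 2 : ℝ) / 2) *
        Real.exp (-(hnorm η) ^ 2 / (c₁ * t)) ≤ h η t) :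
    ∃ c' : ℝ, 0 < c' ∧ ∀ (η : H N) (t : ℝ), 0 < t →
      ENNReal.ofReal (c' * t ^ (-(2 * N + 2 : ℝ) / α) *
          (1 + hnorm η / t ^ (1 / α)) ^ (-((2 * N + 2 : ℝ) + α)))
        ≤ ∫⁻ s in Set.Ioi (0 : ℝ), ENNReal.ofReal (h η s * φ t s) :=
  aux_stmt_16 N hN α c C₁ c₁ hα hα2 hc hC₁ hc₁ φ h hφ0 hφlb hh0 hnorm
    (fun η => Real.rpow_nonneg (by positivity) _) hhlb
end
end
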